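/- A finite simple graph G admits a sequential embedding in ℝ^d (for d ≥ 2) if and only if G is 2^d-colorable. -/
import Mathlib

private lemma gcd_dvd_one_of_comb (g a b x y : ℤ) (ha : g ∣ a) (hb : g ∣ b)
    (h : x * a + y * b = 1) : g ∣ 1 := by
  have := dvd_add (Dvd.dvd.mul_left ha x) (Dvd.dvd.mul_left hb y)
  rwa [h] at this

private lemma int_gcd_eq_one (g : ℤ) (h : g ∣ 1) (hn : normalize g = g) : g = 1 := by
  rcases Int.isUnit_iff.mp (isUnit_of_dvd_one h) with h1 | h1
  · exact h1
  · rw [h1] at hn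
    exact absurd hn (by decide)

/-- A finite simple graph `G` admits a sequential embedding in `ℝ^d` (for `d ≥ 2`)
if and only if `G` is `2^d`-colorable. -/
theorem sequential_embedding_iff_colorable {V : Type*} [Fintype V]
    (G : SimpleGraph V) (d : ℕ) (hd : 2 ≤ d) :
    (∃ f : V → Fin d → ℤ, Function.Injective f ∧
        ∀ u v, G.Adj u v → Finset.univ.gcd (fun i => f u i - f v i) = 1) ↔
      G.Colorable (2 ^ d) := by
  classical
  constructor
  · rintro ⟨f, hinj, hgcd⟩
    have C : G.Coloring (Fin d → ZMod 2) := by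
      refine SimpleGraph.Coloring.mk (fun v i => ((f v i : ℤ) : ZMod 2)) ?_
      intro u v huv heq
      have h1 := hgcd u v huv
      have h2 : (2 : ℤ) ∣ Finset.univ.gcd (fun i => f u i - f v i) := by
        refine Finset.dvd_gcd fun i _ => ?_
        have hfi : ((f u i : ℤ) : ZMod 2) = ((f v i : ℤ) : ZMod 2) := congrFun heq i
        have h3 : ((f u i - f v i : ℤ) : ZMod 2) = 0 := by
          push_cast
          rw [hfi]
          ring
        exact_mod_cast (ZMod.intCast_zmod_eq_zero_iff_dvd _ 2).mp h3
      rw [h1] at h2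
      norm_num at h2
    have hcol := C.colorable
    have hcard : Fintype.card (Fin d → ZMod 2) = 2 ^ d := by
      simp [Fintype.card_fun]
    rwa [hcard] at hcol
  · rintro ⟨C⟩
    set e := Fintype.equivFin V with he
    set c : V → ℕ := fun v => (C v : ℕ) with hc
    have hclt : ∀ v, c v < 2 ^ d := fun v => (C v).2
    set j : V → ℤ := fun v => ((e v : ℕ) : ℤ) with hj
    set X : V → ℤ := fun v =>
      if c v % 4 = 0 then 6 * j v
      else if c v % 4 = 1 then 2 * j v
      else if c v % 4 = 2 then 2 * j v + 1
      else 6 * j v + 1 with hX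
    refine ⟨fun v i =>
      if (i : ℕ) = 0 then X v
      else if (i : ℕ) = 1 then ((c v % 4 : ℕ) : ℤ)
      else ((c v / 2 ^ (i : ℕ) % 2 : ℕ) : ℤ), ?_, ?_⟩
    · intro u v huv
      have h0 := congrFun huv ⟨0, by omega⟩
      have h1 := congrFun huv ⟨1, by omega⟩
      simp only at h0 h1
      norm_num at h0 h1
      -- h0 : X u = X v, h1 : c u % 4 = c v % 4
      have hq : c u % 4 = c v % 4 := by exact_mod_cast h1
      have hju : j u = j v := by
        have h4 : c u % 4 = 0 ∨ c u % 4 = 1 ∨ c u % 4 = 2 ∨ c u % 4 = 3 := by omega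
        rcases h4 with h4 | h4 | h4 | h4 <;>
          · rw [hX] at h0
            simp only [h4, hq ▸ h4] at h0
            norm_num at h0
            omega
      have : e u = e v := by
        apply Fin.val_injective
        simp only [hj] at hju
        exact_mod_cast hju
      exact e.injective this
    · intro u v hadj
      set F : Fin d → ℤ := fun i =>
        (if (i : ℕ) = 0 then X u
          else if (i : ℕ) = 1 then ((c u % 4 : ℕ) : ℤ)
          else ((c u / 2 ^ (i : ℕ) % 2 : ℕ) : ℤ)) -
        (if (i : ℕ) = 0 then X v
          else if (i : ℕ) = 1 then ((c v % 4 : ℕ) : ℤ)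
          else ((c v / 2 ^ (i : ℕ) % 2 : ℕ) : ℤ)) with hF
      set g : ℤ := Finset.univ.gcd F with hg
      have hdvd : ∀ i : Fin d, g ∣ F i := fun i => Finset.gcd_dvd (Finset.mem_univ i)
      have hne : c u ≠ c v := by
        intro h
        exact C.valid hadj (Fin.val_injective h)
      have hone : g ∣ 1 := by
        by_cases hq : c u % 4 = c v % 4
        · -- some high bit differs
          have hbit : ∃ i, 2 ≤ i ∧ i < d ∧ c u / 2 ^ i % 2 ≠ c v / 2 ^ i % 2 := by
            by_contra hcon
            push_neg at hcon
            apply hne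
            apply Nat.eq_of_testBit_eq
            intro i
            rcases lt_or_ge i d with hid | hid
            · rcases lt_or_ge i 2 with hi2 | hi2
              · interval_cases i <;>
                  · simp only [Nat.testBit_eq_decide_div_mod_eq, decide_eq_decide]
                    norm_num
                    omega
              · simp only [Nat.testBit_eq_decide_div_mod_eq, decide_eq_decide, hcon i hi2 hid]
            · rw [Nat.testBit_lt_two_pow, Nat.testBit_lt_two_pow]
              · exact lt_of_lt_of_le (hclt v) (Nat.pow_le_pow_right (by norm_num) hid)
              · exact lt_of_lt_of_le (hclt u) (Nat.pow_le_pow_right (by norm_num) hid)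
          obtain ⟨i, hi2, hid, hbne⟩ := hbit
          have hdi := hdvd ⟨i, hid⟩
          simp only [hF, Fin.val_mk] at hdi
          rw [if_neg (show ¬ i = 0 by omega), if_neg (show ¬ i = 1 by omega),
            if_neg (show ¬ i = 0 by omega), if_neg (show ¬ i = 1 by omega)] at hdi
          have : ((c u / 2 ^ i % 2 : ℕ) : ℤ) - ((c v / 2 ^ i % 2 : ℕ) : ℤ) = 1 ∨
              ((c u / 2 ^ i % 2 : ℕ) : ℤ) - ((c v / 2 ^ i % 2 : ℕ) : ℤ) = -1 := by
            have h1 : c u / 2 ^ i % 2 < 2 := Nat.mod_lt _ (by norm_num)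
            have h2 : c v / 2 ^ i % 2 < 2 := Nat.mod_lt _ (by norm_num)
            omega
          rcases this with h | h
          · rwa [h] at hdi
          · rw [h] at hdi
            exact (dvd_neg.mp hdi)
        · -- the two low bits (encoded in coords 0 and 1) differ
          have h0 := hdvd ⟨0, by omega⟩
          have h1 := hdvd ⟨1, by omega⟩
          simp only [hF, Fin.val_mk, reduceIte] at h0 h1
          -- h0 : g ∣ X u - X v, h1 : g ∣ (↑(c u % 4) - ↑(c v % 4))
          have hau : c u % 4 = 0 ∨ c u % 4 = 1 ∨ c u % 4 = 2 ∨ c u % 4 = 3 := by omega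
          have hav : c v % 4 = 0 ∨ c v % 4 = 1 ∨ c v % 4 = 2 ∨ c v % 4 = 3 := by omega
          rw [hX] at h0
          rcases hau with ha | ha | ha | ha <;> rcases hav with hb | hb | hb | hb <;>
            first
              | exact absurd (ha.trans hb.symm) hq
              | simp only [ha, hb, reduceIte] at h0 h1
          -- 12 remaining cases
          · exact gcd_dvd_one_of_comb g _ _ 0 (-1) h0 h1 (by push_cast; ring)
          · exact gcd_dvd_one_of_comb g _ _ (-1) (j v - 3 * j u) h0 h1 (by push_cast; ring)
          · exact gcd_dvd_one_of_comb g _ _ (-1) (2 * (j v - j u)) h0 h1 (by push_cast; ring)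
          · exact gcd_dvd_one_of_comb g _ _ 0 1 h0 h1 (by push_cast; ring)
          · exact gcd_dvd_one_of_comb g _ _ 0 (-1) h0 h1 (by push_cast; ring)
          · exact gcd_dvd_one_of_comb g _ _ (-1) (3 * j v - j u) h0 h1 (by push_cast; ring)
          · exact gcd_dvd_one_of_comb g _ _ (-1) (j u + 1 - 3 * j v) h0 h1 (by push_cast; ring)
          · exact gcd_dvd_one_of_comb g _ _ 0 1 h0 h1 (by push_cast; ring)
          · exact gcd_dvd_one_of_comb g _ _ 0 (-1) h0 h1 (by push_cast; ring)
          · exact gcd_dvd_one_of_comb g _ _ 1 (2 * (j v - j u)) h0 h1 (by push_cast; ring)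
          · exact gcd_dvd_one_of_comb g _ _ (-1) (3 * j u + 1 - j v) h0 h1 (by push_cast; ring)
          · exact gcd_dvd_one_of_comb g _ _ 0 1 h0 h1 (by push_cast; ring)
      exact int_gcd_eq_one g hone Finset.normalize_gcd
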